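/- Let k be a field of characteristic 2 and 1 ≤ m < n. Let R = k[x_1,…,x_m,y_1,…,y_m] ⊆ S = k[x_1,…,x_n,y_1,…,y_n], let 𝔪 = ({x_i, y_i : 1 ≤ i ≤ m}) ⊆ R, 𝔫 = ({x_i, y_i : m+1 ≤ i ≤ n}) ⊆ S, and let M = ({x_i, y_i : 1 ≤ i ≤ n}) be the graded maximal ideal of S. Let G be a finite simple graph on {1,…,n} and H its induced subgraph on {1,…,m}, with binomial edge ideals J_G ⊆ S and J_H ⊆ R. Let A ⊆ {m+1,…,n} and B ⊆ {1,…,n}∖A, set Q = P(A,B) ⊆ S, B′ = B ∩ {1,…,m}, and Q′ = P(∅,B′) ⊆ R. Suppose Q is a minimal prime of J_G, let 𝒞 be a set of minimal primes of J_G not containing Q as an element, and let K be an ideal of R such that ⋂_{P ∈ 𝒞} (P^{[2]} :_S J_G) ⊆ K·S + 𝔫^{[2]}. If K ∩ (Q′^{[2]} :_R J_H) ⊆ 𝔪^{[2]}, then J_G^{[2]} :_S J_G ⊆ M^{[2]}; in particular, by Fedder's criterion, S/J_G is not F-pure. -/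

import Mathlib

open MvPolynomial

noncomputable section

namespace BEI

/-- The polynomial ring `k[x_1,…,x_n,y_1,…,y_n]`: variables `Sum.inl i` are the `x_i`,
variables `Sum.inr i` are the `y_i`. -/
abbrev Ring' (k : Type*) [CommRing k] (n : ℕ) : Type _ := MvPolynomial (Fin n ⊕ Fin n) k

variable {k : Type*} [CommRing k] {n : ℕ}

/-- The variable `x_i`. -/
def xv (i : Fin n) : Ring' k n := X (Sum.inl i)

/-- The variable `y_i`. -/
def yv (i : Fin n) : Ring' k n := X (Sum.inr i)

/-- The binomial `f_{i,j} = x_i y_j - x_j y_i`. -/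
def fb (i j : Fin n) : Ring' k n := xv i * yv j - xv j * yv i

/-- The binomial edge ideal `J_G` of a graph `G` on `{1,…,n}`. -/
def beIdeal (G : SimpleGraph (Fin n)) : Ideal (Ring' k n) :=
  Ideal.span {g | ∃ i j, G.Adj i j ∧ g = fb i j}

/-- The Frobenius power `I^{[p]}`, the ideal generated by the `p`-th powers of all
elements of `I`. -/
def frobPow {A : Type*} [CommSemiring A] (I : Ideal A) (p : ℕ) : Ideal A :=
  Ideal.span ((· ^ p) '' (I : Set A))

/-- The graded maximal ideal `(x_1,…,x_n,y_1,…,y_n)`. -/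
def maxIdeal (k : Type*) [CommRing k] (n : ℕ) : Ideal (Ring' k n) :=
  Ideal.span (Set.range (X : (Fin n ⊕ Fin n) → Ring' k n))

/-- The ideal `P(A,B)`, generated by `{x_i, y_i : i ∈ A}` together with all `f_{a,b}` for
distinct `a, b ∈ B`. -/
def PAB (A B : Finset (Fin n)) : Ideal (Ring' k n) :=
  Ideal.span
    ({g | ∃ i ∈ A, g = xv i ∨ g = yv i} ∪
      {g | ∃ a ∈ B, ∃ b ∈ B, a ≠ b ∧ g = fb a b})

/-- The inclusion of polynomial rings
`R = k[x_1,…,x_m,y_1,…,y_m] → S = k[x_1,…,x_n,y_1,…,y_n]` (for `m ≤ n`). -/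
def incl (k : Type*) [CommRing k] (m n : ℕ) (h : m ≤ n) :
    Ring' k m →+* Ring' k n :=
  (rename (Sum.map (Fin.castLE h) (Fin.castLE h))).toRingHom

/-- The ideal `𝔫 = ({x_i, y_i : m+1 ≤ i ≤ n})` of `S` (with `0`-based indexing: indices
`i` with `m ≤ i`). -/
def nIdeal (k : Type*) [CommRing k] (m n : ℕ) : Ideal (Ring' k n) :=
  Ideal.span {g | ∃ i : Fin n, m ≤ (i : ℕ) ∧
    (g = X (Sum.inl i) ∨ g = X (Sum.inr i))}

/-- The ideal `Q' = P(∅, B')` of `R = k[x_1,…,x_m,y_1,…,y_m]`, where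
`B' = B ∩ {1,…,m}`. -/
def Qprime (k : Type*) [CommRing k] (m n : ℕ) (h : m ≤ n) (B : Finset (Fin n)) :
    Ideal (Ring' k m) :=
  Ideal.span {g | ∃ a b : Fin m, Fin.castLE h a ∈ B ∧ Fin.castLE h b ∈ B ∧ a ≠ b ∧
    g = fb a b}

/-! ### Auxiliary material for the proof -/

section Aux

lemma sq_mem_frobPow {A : Type*} [CommSemiring A] {I : Ideal A} {a : A} (ha : a ∈ I)
    (p : ℕ) : a ^ p ∈ frobPow I p :=
  Ideal.subset_span ⟨a, ha, rfl⟩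

lemma frobPow_mono {A : Type*} [CommSemiring A] {I J : Ideal A} (hIJ : I ≤ J) (p : ℕ) :
    frobPow I p ≤ frobPow J p :=
  Ideal.span_mono (Set.image_mono hIJ)

lemma frobPow_span {A : Type*} [CommRing A] [CharP A 2] (T : Set A) :
    frobPow (Ideal.span T) 2 = Ideal.span ((· ^ 2) '' T) := by
  apply le_antisymm
  · rw [frobPow, Ideal.span_le]
    rintro _ ⟨a, ha, rfl⟩
    rw [SetLike.mem_coe] at ha
    induction ha using Submodule.span_induction with
    | mem x hx => exact Ideal.subset_span ⟨x, hx, rfl⟩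
    | zero => simp
    | add x y hx hy ihx ihy =>
        show (x + y) ^ 2 ∈ _
        rw [add_pow_char x y 2]
        exact Ideal.add_mem _ ihx ihy
    | smul a x hx ih =>
        show (a • x) ^ 2 ∈ _
        rw [smul_eq_mul, mul_pow]
        exact Ideal.mul_mem_left _ _ ih
  · rw [Ideal.span_le]
    rintro _ ⟨t, ht, rfl⟩
    exact Ideal.subset_span ⟨t, Ideal.subset_span ht, rfl⟩

lemma mem_span_X_sq {A σ : Type*} [CommSemiring A] {g : MvPolynomial σ A} :
    g ∈ Ideal.span (Set.range fun v : σ => (X v : MvPolynomial σ A) ^ 2) ↔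
      ∀ e ∈ g.support, ∃ v, 2 ≤ e v := by
  have h1 : (fun v : σ => (X v : MvPolynomial σ A) ^ 2)
      = (fun s => monomial s (1 : A)) ∘ (fun v : σ => Finsupp.single v 2) :=
    funext fun v => X_pow_eq_monomial ..
  rw [h1, Set.range_comp, mem_ideal_span_monomial_image]
  simp [Finsupp.single_le_iff]

lemma frobPow_maxIdeal_eq (k : Type*) [CommRing k] [CharP k 2] (n : ℕ) :
    frobPow (maxIdeal k n) 2
      = Ideal.span (Set.range fun v : Fin n ⊕ Fin n => (X v : Ring' k n) ^ 2) := by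
  rw [maxIdeal, frobPow_span, ← Set.range_comp]
  rfl

/-- The common index of a variable. -/
def idx {n : ℕ} : Fin n ⊕ Fin n → ℕ := Sum.elim Fin.val Fin.val

instance {m n : ℕ} : DecidablePred (fun v : Fin n ⊕ Fin n => m ≤ idx v) :=
  fun _ => Nat.decLe _ _

/-- The "outer" variables, of index `≥ m`. -/
abbrev OuterVar (m n : ℕ) := {v : Fin n ⊕ Fin n // m ≤ idx v}

/-- Identification of the inner variables with the variables of `R`. -/
def innerEquiv {m n : ℕ} (h : m ≤ n) :
    (Fin m ⊕ Fin m) ≃ {v : Fin n ⊕ Fin n // ¬ m ≤ idx v} where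
  toFun a := ⟨Sum.map (Fin.castLE h) (Fin.castLE h) a, by
    cases a <;> simp [idx, not_le]⟩
  invFun v := match v with
    | ⟨.inl i, hv⟩ => .inl ⟨i.val, by simpa [idx, not_le] using hv⟩
    | ⟨.inr i, hv⟩ => .inr ⟨i.val, by simpa [idx, not_le] using hv⟩
  left_inv a := by cases a <;> rfl
  right_inv v := by obtain ⟨v, hv⟩ := v; cases v <;> rfl

/-- Splitting of the variables of `S` into outer and inner ones. -/
def splitEquiv {m n : ℕ} (h : m ≤ n) :
    (Fin n ⊕ Fin n) ≃ (OuterVar m n ⊕ (Fin m ⊕ Fin m)) :=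
  (Equiv.sumCompl (fun v => m ≤ idx v)).symm.trans
    (Equiv.sumCongr (Equiv.refl _) (innerEquiv h).symm)

lemma splitEquiv_out {m n : ℕ} (h : m ≤ n) (v : Fin n ⊕ Fin n) (hv : m ≤ idx v) :
    splitEquiv h v = Sum.inl ⟨v, hv⟩ := by
  rw [splitEquiv, Equiv.trans_apply,
    Equiv.sumCompl_symm_apply_of_pos (p := fun v : Fin n ⊕ Fin n => m ≤ idx v) hv]
  rfl

lemma splitEquiv_in {m n : ℕ} (h : m ≤ n) (a : Fin m ⊕ Fin m) :
    splitEquiv h (Sum.map (Fin.castLE h) (Fin.castLE h) a) = Sum.inr a := by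
  have hv : ¬ m ≤ idx (Sum.map (Fin.castLE h) (Fin.castLE h) a) := (innerEquiv h a).2
  rw [splitEquiv, Equiv.trans_apply,
    Equiv.sumCompl_symm_apply_of_neg (p := fun v : Fin n ⊕ Fin n => m ≤ idx v) hv]
  show Sum.inr ((innerEquiv h).symm ⟨_, hv⟩) = _
  rw [show (⟨Sum.map (Fin.castLE h) (Fin.castLE h) a, hv⟩ :
      {v : Fin n ⊕ Fin n // ¬ m ≤ idx v}) = innerEquiv h a from rfl,
    Equiv.symm_apply_apply]

/-- The isomorphism `S ≃ R[outer variables]`. -/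
def phi (k : Type*) [CommRing k] {m n : ℕ} (h : m ≤ n) :
    Ring' k n ≃ₐ[k] MvPolynomial (OuterVar m n) (Ring' k m) :=
  (renameEquiv k (splitEquiv h)).trans (sumAlgEquiv k _ _)

lemma phi_X_out {k : Type*} [CommRing k] {m n : ℕ} (h : m ≤ n) (v : Fin n ⊕ Fin n)
    (hv : m ≤ idx v) : phi k h (X v) = X (⟨v, hv⟩ : OuterVar m n) := by
  simp [phi, splitEquiv_out h v hv, sumToIter_Xl]

lemma phi_X_in {k : Type*} [CommRing k] {m n : ℕ} (h : m ≤ n) (a : Fin m ⊕ Fin m) :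
    phi k h (X (Sum.map (Fin.castLE h) (Fin.castLE h) a)) = C (X a) := by
  simp [phi, splitEquiv_in h a, sumToIter_Xr]

/-- The isomorphism `phi` as a ring homomorphism. -/
def PhiR (k : Type*) [CommRing k] {m n : ℕ} (h : m ≤ n) :
    Ring' k n →+* MvPolynomial (OuterVar m n) (Ring' k m) :=
  (phi k h).toAlgHom.toRingHom

lemma PhiR_apply {k : Type*} [CommRing k] {m n : ℕ} (h : m ≤ n) (x : Ring' k n) :
    PhiR k h x = phi k h x := rfl

lemma phi_C {k : Type*} [CommRing k] {m n : ℕ} (h : m ≤ n) (c : k) :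
    phi k h (C c) = C (C c) := by
  have := (phi k h).commutes c
  rwa [show (algebraMap k (Ring' k n)) c = C c from rfl,
    show (algebraMap k (MvPolynomial (OuterVar m n) (Ring' k m))) c = C (C c) from rfl]
    at this

lemma incl_X {k : Type*} [CommRing k] {m n : ℕ} (h : m ≤ n) (a : Fin m ⊕ Fin m) :
    incl k m n h (X a) = X (Sum.map (Fin.castLE h) (Fin.castLE h) a) :=
  rename_X _ _

lemma PhiR_comp_incl {k : Type*} [CommRing k] {m n : ℕ} (h : m ≤ n) :
    (PhiR k h).comp (incl k m n h)
      = (C : Ring' k m →+* MvPolynomial (OuterVar m n) (Ring' k m)) := by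
  apply MvPolynomial.ringHom_ext
  · intro c
    show PhiR k h (incl k m n h (C c)) = _
    rw [show incl k m n h (C c) = C c from rename_C _ _, PhiR_apply, phi_C]
  · intro a
    show PhiR k h (incl k m n h (X a)) = _
    rw [incl_X, PhiR_apply, phi_X_in]

lemma phi_incl {k : Type*} [CommRing k] {m n : ℕ} (h : m ≤ n) (r : Ring' k m) :
    phi k h (incl k m n h r) = C r := by
  rw [← PhiR_apply]
  exact RingHom.congr_fun (PhiR_comp_incl h) r

lemma incl_fb {k : Type*} [CommRing k] {m n : ℕ} (h : m ≤ n) (i j : Fin m) :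
    incl k m n h (fb i j) = fb (Fin.castLE h i) (Fin.castLE h j) := by
  simp [fb, xv, yv, incl]

/-- The ideal generated by the squares of the outer variables, in
`R[outer variables]`. -/
def NSq (k : Type*) [CommRing k] (m n : ℕ) :
    Ideal (MvPolynomial (OuterVar m n) (Ring' k m)) :=
  Ideal.span (Set.range fun t : OuterVar m n =>
    (X t : MvPolynomial (OuterVar m n) (Ring' k m)) ^ 2)

lemma coeff_eq_zero_of_NSq {k : Type*} [CommRing k] {m n : ℕ}
    {d : OuterVar m n →₀ ℕ} (hd : ∀ t, d t ≤ 1)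
    {b : MvPolynomial (OuterVar m n) (Ring' k m)} (hb : b ∈ NSq k m n) :
    coeff d b = 0 := by
  by_contra hne
  obtain ⟨t, ht⟩ := mem_span_X_sq.mp hb d (mem_support_iff.mpr hne)
  exact absurd (hd t) (by omega)

end Aux

section Aux2

lemma map_frobPow_nIdeal_le {k : Type*} [CommRing k] [CharP k 2] {m n : ℕ} (h : m ≤ n) :
    Ideal.map (PhiR k h) (frobPow (nIdeal k m n) 2) ≤ NSq k m n := by
  rw [nIdeal, frobPow_span, Ideal.map_span, Ideal.span_le]
  rintro _ ⟨_, ⟨g, ⟨i, him, hg⟩, rfl⟩, rfl⟩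
  rcases hg with rfl | rfl
  · rw [SetLike.mem_coe, map_pow, PhiR_apply, phi_X_out h (Sum.inl i) him]
    exact Ideal.subset_span ⟨⟨Sum.inl i, him⟩, rfl⟩
  · rw [SetLike.mem_coe, map_pow, PhiR_apply, phi_X_out h (Sum.inr i) him]
    exact Ideal.subset_span ⟨⟨Sum.inr i, him⟩, rfl⟩

lemma map_frobPow_PAB_le {k : Type*} [CommRing k] [CharP k 2] {m n : ℕ} (h : m ≤ n)
    {A B : Finset (Fin n)} (hA : ∀ i ∈ A, m ≤ (i : ℕ)) :
    Ideal.map (PhiR k h) (frobPow (PAB (k := k) A B) 2)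
      ≤ Ideal.map (C : Ring' k m →+* MvPolynomial (OuterVar m n) (Ring' k m))
          (frobPow (Qprime k m n h B) 2) ⊔ NSq k m n := by
  rw [PAB, frobPow_span, Ideal.map_span, Ideal.span_le]
  rintro _ ⟨_, ⟨g, hg, rfl⟩, rfl⟩
  rw [SetLike.mem_coe, map_pow]
  rcases hg with ⟨i, hiA, hxy⟩ | ⟨a, haB, b, hbB, hab, rfl⟩
  · have him : m ≤ (i : ℕ) := hA i hiA
    rcases hxy with rfl | rfl
    · rw [PhiR_apply, show (xv i : Ring' k n) = X (Sum.inl i) from rfl,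
        phi_X_out h (Sum.inl i) him]
      exact Ideal.mem_sup_right (Ideal.subset_span ⟨⟨Sum.inl i, him⟩, rfl⟩)
    · rw [PhiR_apply, show (yv i : Ring' k n) = X (Sum.inr i) from rfl,
        phi_X_out h (Sum.inr i) him]
      exact Ideal.mem_sup_right (Ideal.subset_span ⟨⟨Sum.inr i, him⟩, rfl⟩)
  · by_cases hcase : (a : ℕ) < m ∧ (b : ℕ) < m
    · obtain ⟨ha, hb⟩ := hcase
      set a' : Fin m := ⟨(a : ℕ), ha⟩ with ha'
      set b' : Fin m := ⟨(b : ℕ), hb⟩ with hb'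
      have hca : Fin.castLE h a' = a := Fin.ext rfl
      have hcb : Fin.castLE h b' = b := Fin.ext rfl
      have hfb : (fb a b : Ring' k n) = incl k m n h (fb a' b') := by
        rw [incl_fb, hca, hcb]
      have hne : a' ≠ b' := by
        intro hEq
        apply hab
        rw [← hca, ← hcb, hEq]
      rw [PhiR_apply, hfb, phi_incl, ← map_pow]
      apply Ideal.mem_sup_left
      refine Ideal.mem_map_of_mem _ (sq_mem_frobPow (Ideal.subset_span ?_) 2)
      exact ⟨a', b', hca ▸ haB, hcb ▸ hbB, hne, rfl⟩
    · have hcase' : m ≤ (a : ℕ) ∨ m ≤ (b : ℕ) := by omega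
      have hsq : (fb a b : Ring' k n) ^ 2 = (xv a) ^ 2 * (yv b) ^ 2 + (xv b) ^ 2 * (yv a) ^ 2 := by
        rw [fb, CharTwo.sub_eq_add, CharTwo.add_sq, mul_pow, mul_pow]
      rw [PhiR_apply, ← map_pow, hsq, map_add, map_mul, map_mul, map_pow, map_pow,
        map_pow, map_pow]
      apply Ideal.mem_sup_right
      apply Ideal.add_mem
      · rcases hcase' with hc | hc
        · rw [show (phi k h) (xv a) = X (⟨Sum.inl a, hc⟩ : OuterVar m n) from
            phi_X_out h (Sum.inl a) hc]
          exact Ideal.mul_mem_right _ _ (Ideal.subset_span ⟨_, rfl⟩)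
        · rw [show (phi k h) (yv b) = X (⟨Sum.inr b, hc⟩ : OuterVar m n) from
            phi_X_out h (Sum.inr b) hc]
          exact Ideal.mul_mem_left _ _ (Ideal.subset_span ⟨_, rfl⟩)
      · rcases hcase' with hc | hc
        · rw [show (phi k h) (yv a) = X (⟨Sum.inr a, hc⟩ : OuterVar m n) from
            phi_X_out h (Sum.inr a) hc]
          exact Ideal.mul_mem_left _ _ (Ideal.subset_span ⟨_, rfl⟩)
        · rw [show (phi k h) (xv b) = X (⟨Sum.inl b, hc⟩ : OuterVar m n) from
            phi_X_out h (Sum.inl b) hc]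
          exact Ideal.mul_mem_right _ _ (Ideal.subset_span ⟨_, rfl⟩)

end Aux2

/-- the reduction step for Fedder's criterion.  With
`S = k[x_1,…,x_n,y_1,…,y_n] ⊇ R = k[x_1,…,x_m,y_1,…,y_m]` in characteristic `2`, `H` the
induced subgraph of `G` on `{1,…,m}`, `A ⊆ {m+1,…,n}`, `B` disjoint from `A`,
`Q = P(A,B)` a minimal prime of `J_G`, `𝒞` a set of minimal primes of `J_G` not
containing `Q`, and `K ⊆ R` an ideal with `⋂_{P ∈ 𝒞} (P^{[2]} :_S J_G) ⊆ KS + 𝔫^{[2]}`: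
if `K ∩ (Q'^{[2]} :_R J_H) ⊆ 𝔪^{[2]}`, then `J_G^{[2]} :_S J_G ⊆ M^{[2]}` (so `S/J_G` is
not F-pure by Fedder's criterion). -/
theorem reduction_step_fedder (k : Type*) [Field k] [CharP k 2]
    (m n : ℕ) (hm : 1 ≤ m) (hmn : m < n)
    (G : SimpleGraph (Fin n))
    (A B : Finset (Fin n))
    (hA : ∀ i ∈ A, m ≤ (i : ℕ))
    (hAB : Disjoint A B)
    (hQmin : PAB (k := k) A B ∈ (beIdeal (k := k) G).minimalPrimes)
    (𝒞 : Set (Ideal (Ring' k n)))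
    (h𝒞 : 𝒞 ⊆ (beIdeal (k := k) G).minimalPrimes)
    (hQnot : PAB (k := k) A B ∉ 𝒞)
    (K : Ideal (Ring' k m))
    (hK : (⨅ P ∈ 𝒞, Submodule.colon (frobPow P 2) (beIdeal (k := k) G))
        ≤ Ideal.map (incl k m n hmn.le) K ⊔ frobPow (nIdeal k m n) 2)
    (hfin : K ⊓ Submodule.colon (frobPow (Qprime k m n hmn.le B) 2)
          (beIdeal (k := k) (G.comap (Fin.castLE hmn.le)))
        ≤ frobPow (maxIdeal k m) 2) :
    Submodule.colon (frobPow (beIdeal (k := k) G) 2) (beIdeal (k := k) G)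
      ≤ frobPow (maxIdeal k n) 2 := by
  intro f hf
  have hle : m ≤ n := hmn.le
  -- Step 1: `f ∈ K·S + 𝔫^{[2]}`, since `f` lies in each `(P^{[2]} : J_G)`.
  have hfK : f ∈ Ideal.map (incl k m n hle) K ⊔ frobPow (nIdeal k m n) 2 := by
    apply hK
    refine (Submodule.mem_iInf _).mpr fun P => (Submodule.mem_iInf _).mpr fun hP => ?_
    exact Submodule.colon_mono (frobPow_mono (h𝒞 hP).1.2 2) le_rfl hf
  -- Step 2: transport to `R[outer variables]`.
  have h2 : phi k hle f ∈ Ideal.map (C : Ring' k m →+* _) K ⊔ NSq k m n := by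
    have h2a := Ideal.mem_map_of_mem (PhiR k hle) hfK
    rw [Ideal.map_sup, Ideal.map_map, PhiR_comp_incl] at h2a
    rw [← PhiR_apply]
    exact sup_le_sup le_rfl (map_frobPow_nIdeal_le hle) h2a
  -- Step 3: each squarefree coefficient of `phi f` lies in `𝔪^{[2]}`.
  have hcoeff : ∀ d : OuterVar m n →₀ ℕ, (∀ t, d t ≤ 1) →
      coeff d (phi k hle f) ∈ frobPow (maxIdeal k m) 2 := by
    intro d hd
    apply hfin
    refine Submodule.mem_inf.mpr ⟨?_, ?_⟩
    · obtain ⟨a, haK, b, hbN, hab⟩ := Submodule.mem_sup.mp h2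
      rw [← hab, coeff_add, coeff_eq_zero_of_NSq hd hbN, add_zero]
      exact mem_map_C_iff.mp haK d
    · rw [Submodule.mem_colon]
      intro w hw
      rw [beIdeal] at hw
      induction hw using Submodule.span_induction with
      | mem w hwgen =>
        obtain ⟨i, j, hadj, rfl⟩ := hwgen
        rw [smul_eq_mul]
        have hadj' : G.Adj (Fin.castLE hle i) (Fin.castLE hle j) := hadj
        have h1 : f * fb (Fin.castLE hle i) (Fin.castLE hle j)
            ∈ frobPow (PAB (k := k) A B) 2 := by
          have hmem : fb (Fin.castLE hle i) (Fin.castLE hle j) ∈ beIdeal (k := k) G :=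
            Ideal.subset_span ⟨_, _, hadj', rfl⟩
          have h0 := Submodule.mem_colon.mp hf _ hmem
          rw [smul_eq_mul] at h0
          exact frobPow_mono hQmin.1.2 2 h0
        have h3 := map_frobPow_PAB_le hle hA (Ideal.mem_map_of_mem (PhiR k hle) h1)
        rw [map_mul, PhiR_apply, PhiR_apply, ← incl_fb hle, phi_incl] at h3
        obtain ⟨a, haF, b, hbN, hab⟩ := Submodule.mem_sup.mp h3
        have hcc : coeff d (phi k hle f * C (fb i j))
            = coeff d (phi k hle f) * fb i j := by
          rw [mul_comm, coeff_C_mul, mul_comm]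
        rw [← hcc, ← hab, coeff_add, coeff_eq_zero_of_NSq hd hbN, add_zero]
        exact mem_map_C_iff.mp haF d
      | zero => simp
      | add x y hx hy ihx ihy =>
        rw [smul_add]
        exact Ideal.add_mem _ ihx ihy
      | smul c x hx ih =>
        rw [smul_comm]
        exact Submodule.smul_mem _ _ ih
  -- Step 4: hence `phi f ∈ 𝔪^{[2]}·T + NSq`.
  have hginM : phi k hle f ∈ Ideal.map (C : Ring' k m →+* _) (frobPow (maxIdeal k m) 2)
      ⊔ NSq k m n := by
    rw [as_sum (phi k hle f)]
    apply Ideal.sum_mem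
    intro d hdsup
    by_cases hd : ∀ t, d t ≤ 1
    · rw [show (monomial d) (coeff d (phi k hle f))
          = C (coeff d (phi k hle f)) * monomial d 1 by rw [C_mul_monomial, mul_one]]
      exact Ideal.mem_sup_left (Ideal.mul_mem_right _ _
        (Ideal.mem_map_of_mem _ (hcoeff d hd)))
    · push_neg at hd
      obtain ⟨t, ht⟩ := hd
      have ht2 : Finsupp.single t 2 ≤ d := Finsupp.single_le_iff.mpr (by omega)
      rw [show (monomial d) (coeff d (phi k hle f))
          = (X t) ^ 2 * monomial (d - Finsupp.single t 2) (coeff d (phi k hle f)) by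
        rw [X_pow_eq_monomial, monomial_mul, one_mul, add_tsub_cancel_of_le ht2]]
      exact Ideal.mem_sup_right (Ideal.mul_mem_right _ _ (Ideal.subset_span ⟨t, rfl⟩))
  -- Step 5: `𝔪^{[2]}·T + NSq ⊆ phi(M^{[2]})`, so we can pull back.
  have hPhiXsq : ∀ v : Fin n ⊕ Fin n,
      (phi k hle) (X v) ^ 2 ∈ Ideal.map (PhiR k hle) (frobPow (maxIdeal k n) 2) := by
    intro v
    rw [← PhiR_apply, ← map_pow]
    have hXmem : (X v : Ring' k n) ∈ maxIdeal k n := Ideal.subset_span ⟨v, rfl⟩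
    exact Ideal.mem_map_of_mem _ (sq_mem_frobPow hXmem 2)
  have hsup_le : Ideal.map (C : Ring' k m →+* _) (frobPow (maxIdeal k m) 2) ⊔ NSq k m n
      ≤ Ideal.map (PhiR k hle) (frobPow (maxIdeal k n) 2) := by
    apply sup_le
    · rw [frobPow_maxIdeal_eq, Ideal.map_span, Ideal.span_le]
      rintro y hy
      simp only [Set.mem_image, Set.mem_range] at hy
      obtain ⟨_, ⟨w, rfl⟩, rfl⟩ := hy
      rw [SetLike.mem_coe, map_pow,
        show (C (X w) : MvPolynomial (OuterVar m n) (Ring' k m))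
          = phi k hle (X (Sum.map (Fin.castLE hle) (Fin.castLE hle) w))
          from (phi_X_in hle w).symm]
      exact hPhiXsq _
    · rw [NSq, Ideal.span_le]
      rintro _ ⟨t, rfl⟩
      have hXt : phi k hle (X t.val) = X t := phi_X_out hle t.val t.2
      show (X t : MvPolynomial (OuterVar m n) (Ring' k m)) ^ 2 ∈ _
      rw [← hXt]
      exact hPhiXsq _
  have hmem := hsup_le hginM
  have hsurj : Function.Surjective (PhiR k hle) := fun y =>
    ⟨(phi k hle).symm y, (phi k hle).apply_symm_apply y⟩
  obtain ⟨x, hx, hxe⟩ := (Ideal.mem_map_iff_of_surjective (PhiR k hle) hsurj).mp hmem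
  have hxf : x = f := (phi k hle).injective hxe
  rwa [hxf] at hx

end BEI
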